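/- Let X be a metric space with a ccc geodesic bicombing σ, and let c : [0,1] → X be a constant-speed geodesic, i.e. d(c(s),c(t)) = |s−t|·d(c(0),c(1)) for all s,t ∈ [0,1]. Suppose c is locally a σ-geodesic: there exists an open cover 𝒰 of [0,1] such that for every U ∈ 𝒰 and all s,t ∈ U with s ≤ t, the image of σ_{c(s)c(t)} equals c([s,t]). Then c is the σ-geodesic from c(0) to c(1), i.e. c(t) = σ(c(0),c(1),t) for all t ∈ [0,1]. -/

import Mathlib

open Metric Set

variable {X : Type*} [MetricSpace X]

/-- A geodesic bicombing on a metric space: a continuous choice of constant-speed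
geodesics, parametrized on `[0,1]`. -/
def IsGeodesicBicombing (σ : X → X → ℝ → X) : Prop :=
  ContinuousOn (fun p : X × X × ℝ => σ p.1 p.2.1 p.2.2)
    {p : X × X × ℝ | p.2.2 ∈ Set.Icc (0 : ℝ) 1} ∧
  (∀ x y : X, σ x y 0 = x) ∧
  (∀ x y : X, σ x y 1 = y) ∧
  (∀ x y : X, ∀ s ∈ Set.Icc (0 : ℝ) 1, ∀ t ∈ Set.Icc (0 : ℝ) 1,
    dist (σ x y s) (σ x y t) = |s - t| * dist x y)

/-- A bicombing is conical. -/
def IsConical (σ : X → X → ℝ → X) : Prop :=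
  ∀ x y x' y' : X, ∀ t ∈ Set.Icc (0 : ℝ) 1,
    dist (σ x y t) (σ x' y' t) ≤ (1 - t) * dist x x' + t * dist y y'

/-- A bicombing is consistent. -/
def IsConsistent (σ : X → X → ℝ → X) : Prop :=
  ∀ x y : X, ∀ s t l : ℝ, 0 ≤ s → s ≤ t → t ≤ 1 → l ∈ Set.Icc (0 : ℝ) 1 →
    σ (σ x y s) (σ x y t) l = σ x y ((1 - l) * s + l * t)

/-- A ccc bicombing: a geodesic bicombing that is consistent and conical. -/
def IsCCC (σ : X → X → ℝ → X) : Prop :=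
  IsGeodesicBicombing σ ∧ IsConsistent σ ∧ IsConical σ

/-- A `σ`-ray: a unit-speed geodesic ray compatible with the bicombing `σ`
(encoded as a map on `ℝ` which is constant on `(-∞,0]`). -/
def IsRay (σ : X → X → ℝ → X) (ξ : ℝ → X) : Prop :=
  (∀ t : ℝ, t ≤ 0 → ξ t = ξ 0) ∧
  (∀ s t : ℝ, 0 ≤ s → 0 ≤ t → dist (ξ s) (ξ t) = |s - t|) ∧
  (∀ t : ℝ, 0 ≤ t → ∀ s ∈ Set.Icc (0 : ℝ) 1, σ (ξ 0) (ξ t) s = ξ (s * t))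

/-- Two rays are asymptotic: their distance at time `t` is uniformly bounded for `t ≥ 0`. -/
def Asymptotic (ξ ζ : ℝ → X) : Prop :=
  ∃ M : ℝ, ∀ t : ℝ, 0 ≤ t → dist (ξ t) (ζ t) ≤ M

/-- **Local σ-geodesics are σ-geodesics** (Proposition `loctoglobgeod`): a constant-speed
geodesic `c : [0,1] → X` which is locally a σ-geodesic equals the σ-geodesic from
`c(0)` to `c(1)`. -/
theorem local_to_global_geodesic
    (σ : X → X → ℝ → X) (hσ : IsCCC σ)
    (c : ℝ → X)
    (hc : ∀ s ∈ Set.Icc (0 : ℝ) 1, ∀ t ∈ Set.Icc (0 : ℝ) 1,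
      dist (c s) (c t) = |s - t| * dist (c 0) (c 1))
    (hloc : ∃ 𝒰 : Set (Set ℝ), (∀ U ∈ 𝒰, IsOpen U) ∧ Set.Icc (0 : ℝ) 1 ⊆ ⋃₀ 𝒰 ∧
      ∀ U ∈ 𝒰, ∀ s ∈ U ∩ Set.Icc (0 : ℝ) 1, ∀ t ∈ U ∩ Set.Icc (0 : ℝ) 1, s ≤ t →
        (fun l => σ (c s) (c t) l) '' Set.Icc (0 : ℝ) 1 = c '' Set.Icc s t) :
    ∀ t ∈ Set.Icc (0 : ℝ) 1, c t = σ (c 0) (c 1) t := by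
  classical
  obtain ⟨⟨hcont, hσ0, hσ1, hσd⟩, hcons, hconic⟩ := hσ
  obtain ⟨𝒰, hUopen, hUcover, hUgeod⟩ := hloc
  set D := dist (c 0) (c 1) with hD
  by_cases hD0 : D = 0
  · intro t ht
    have h1 : dist (c t) (c 0) = 0 := by
      rw [hc t ht 0 ⟨le_refl 0, zero_le_one⟩, hD0, mul_zero]
    have h2 : dist (σ (c 0) (c 1) t) (σ (c 0) (c 1) 0) = 0 := by
      rw [hσd (c 0) (c 1) t ht 0 ⟨le_refl 0, zero_le_one⟩, ← hD, hD0, mul_zero]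
    rw [hσ0 (c 0) (c 1)] at h2
    rw [dist_eq_zero] at h1 h2
    rw [h1, h2]
  have hDpos : 0 < D := lt_of_le_of_ne dist_nonneg (Ne.symm hD0)
  set f : ℝ → ℝ := fun t => dist (c t) (σ (c 0) (c 1) t) with hf
  -- three-point local convexity of f
  have key : ∀ U ∈ 𝒰, ∀ s u t' : ℝ, s ∈ U ∩ Icc (0:ℝ) 1 → u ∈ U ∩ Icc (0:ℝ) 1 →
      t' ∈ U ∩ Icc (0:ℝ) 1 → s ≤ u → u ≤ t' → s < t' →
      (t' - s) * f u ≤ (t' - u) * f s + (u - s) * f t' := by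
    intro U hU s u t' hs hu ht' hsu hut hst
    have hts : 0 < t' - s := sub_pos.2 hst
    set l := (u - s) / (t' - s) with hl
    have hl0 : 0 ≤ l := div_nonneg (by linarith) hts.le
    have hl1 : l ≤ 1 := (div_le_one hts).2 (by linarith)
    have himg := hUgeod U hU s hs t' ht' hst.le
    have hcu : c u = σ (c s) (c t') l := by
      have hmem : c u ∈ c '' Icc s t' := ⟨u, ⟨hsu, hut⟩, rfl⟩
      rw [← himg] at hmem
      obtain ⟨m, hm, hme₀⟩ := hmem
      have hme : σ (c s) (c t') m = c u := hme₀
      have h1 : dist (σ (c s) (c t') m) (σ (c s) (c t') 0) = |m - 0| * dist (c s) (c t') :=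
        hσd _ _ m hm 0 ⟨le_refl 0, zero_le_one⟩
      rw [hme, hσ0] at h1
      have h2 : dist (c u) (c s) = |u - s| * D := hc u hu.2 s hs.2
      have h3 : dist (c s) (c t') = |s - t'| * D := hc s hs.2 t' ht'.2
      rw [h3, h2] at h1
      rw [abs_of_nonneg (by linarith : (0:ℝ) ≤ u - s)] at h1
      rw [abs_of_nonpos (by linarith : s - t' ≤ (0:ℝ))] at h1
      rw [sub_zero, abs_of_nonneg hm.1] at h1
      have hm_eq : m = l := by
        rw [hl]
        rw [eq_div_iff hts.ne']
        have : (u - s) * D = m * (t' - s) * D := by rw [h1]; ring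
        exact (mul_right_cancel₀ hDpos.ne' this).symm
      rw [← hm_eq]; exact hme.symm
    have hσu : σ (c 0) (c 1) u = σ (σ (c 0) (c 1) s) (σ (c 0) (c 1) t') l := by
      rw [hcons (c 0) (c 1) s t' l hs.2.1 (hsu.trans hut) ht'.2.2 ⟨hl0, hl1⟩]
      congr 1
      rw [hl]
      field_simp
      ring
    have hcon := hconic (c s) (c t') (σ (c 0) (c 1) s) (σ (c 0) (c 1) t') l ⟨hl0, hl1⟩
    have hfu : f u ≤ (1 - l) * f s + l * f t' := by
      simp only [hf]
      rw [hcu, hσu]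
      exact hcon
    have e1 : (t' - s) * l = u - s := by rw [hl]; field_simp
    have e2 : (t' - s) * (1 - l) = t' - u := by rw [hl]; field_simp; ring
    calc (t' - s) * f u ≤ (t' - s) * ((1 - l) * f s + l * f t') :=
          mul_le_mul_of_nonneg_left hfu hts.le
      _ = ((t' - s) * (1 - l)) * f s + ((t' - s) * l) * f t' := by ring
      _ = (t' - u) * f s + (u - s) * f t' := by rw [e1, e2]
  -- continuity of f on [0,1]
  have hccont : ContinuousOn c (Icc (0:ℝ) 1) := by
    refine LipschitzOnWith.continuousOn (K := Real.toNNReal D) ?_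
    refine LipschitzOnWith.of_dist_le_mul fun x hx y hy => ?_
    rw [hc x hx y hy, Real.dist_eq, Real.coe_toNNReal D hDpos.le, mul_comm]
  have hσccont : ContinuousOn (fun t => σ (c 0) (c 1) t) (Icc (0:ℝ) 1) := by
    refine LipschitzOnWith.continuousOn (K := Real.toNNReal D) ?_
    refine LipschitzOnWith.of_dist_le_mul fun x hx y hy => ?_
    rw [hσd (c 0) (c 1) x hx y hy, Real.dist_eq, Real.coe_toNNReal D hDpos.le, ← hD, mul_comm]
  have hfcont : ContinuousOn f (Icc (0:ℝ) 1) :=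
    by have := continuous_dist.comp_continuousOn (hccont.prodMk hσccont); exact this
  -- maximum of f
  obtain ⟨t₀, ht₀, hmax⟩ := isCompact_Icc.exists_isMaxOn (nonempty_Icc.2 zero_le_one) hfcont
  set M := f t₀ with hM
  have hmax' : ∀ t ∈ Icc (0:ℝ) 1, f t ≤ M := fun t ht => hmax ht
  have hf0 : f 0 = 0 := by simp only [hf]; rw [hσ0, dist_self]
  have hf1 : f 1 = 0 := by simp only [hf]; rw [hσ1, dist_self]
  have hM0 : M ≤ 0 := by
    by_contra hMpos
    push_neg at hMpos
    set A := Icc (0:ℝ) 1 ∩ f ⁻¹' {M} with hA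
    have hAne : A.Nonempty := ⟨t₀, ht₀, rfl⟩
    have hAbdd : BddBelow A := ⟨0, fun x hx => hx.1.1⟩
    have hAclosed : IsClosed A :=
      hfcont.preimage_isClosed_of_isClosed isClosed_Icc isClosed_singleton
    set t₁ := sInf A with ht₁def
    have ht₁A : t₁ ∈ A := hAclosed.csInf_mem hAne hAbdd
    have ht₁I : t₁ ∈ Icc (0:ℝ) 1 := ht₁A.1
    have hft₁ : f t₁ = M := ht₁A.2
    have ht₁0 : t₁ ≠ 0 := by intro h; rw [h, hf0] at hft₁; linarith
    have ht₁1 : t₁ ≠ 1 := by intro h; rw [h, hf1] at hft₁; linarith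
    have ht₁pos : 0 < t₁ := lt_of_le_of_ne ht₁I.1 (Ne.symm ht₁0)
    have ht₁lt : t₁ < 1 := lt_of_le_of_ne ht₁I.2 ht₁1
    obtain ⟨U, hU, ht₁U⟩ := hUcover ht₁I
    obtain ⟨ε, hε, hball⟩ := Metric.isOpen_iff.1 (hUopen U hU) t₁ ht₁U
    set δ := min (ε / 2) (min t₁ (1 - t₁)) with hδdef
    have hδpos : 0 < δ := lt_min (by linarith) (lt_min ht₁pos (by linarith))
    have hδε : δ < ε := lt_of_le_of_lt (min_le_left _ _) (by linarith)
    have hδt₁ : δ ≤ t₁ := le_trans (min_le_right _ _) (min_le_left _ _)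
    have hδt₁' : δ ≤ 1 - t₁ := le_trans (min_le_right _ _) (min_le_right _ _)
    have hsU : t₁ - δ ∈ U ∩ Icc (0:ℝ) 1 := by
      constructor
      · apply hball
        rw [Metric.mem_ball, Real.dist_eq]
        rw [abs_of_nonpos (by linarith)]
        linarith
      · constructor <;> linarith
    have huU : t₁ ∈ U ∩ Icc (0:ℝ) 1 := ⟨ht₁U, ht₁I⟩
    have htU : t₁ + δ ∈ U ∩ Icc (0:ℝ) 1 := by
      constructor
      · apply hball
        rw [Metric.mem_ball, Real.dist_eq]
        rw [abs_of_nonneg (by linarith)]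
        linarith
      · constructor <;> linarith
    have hkey := key U hU (t₁ - δ) t₁ (t₁ + δ) hsU huU htU (by linarith) (by linarith)
      (by linarith)
    have hfs : f (t₁ - δ) ≤ M := hmax' _ hsU.2
    have hft : f (t₁ + δ) ≤ M := hmax' _ htU.2
    have hfsM : f (t₁ - δ) = M := by
      rw [hft₁] at hkey
      have h1 : (t₁ + δ - (t₁ - δ)) = 2 * δ := by ring
      have h2 : (t₁ + δ - t₁) = δ := by ring
      have h3 : (t₁ - (t₁ - δ)) = δ := by ring
      rw [h1, h2, h3] at hkey
      nlinarith
    have hsA : t₁ - δ ∈ A := ⟨hsU.2, hfsM⟩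
    have := csInf_le hAbdd hsA
    rw [← ht₁def] at this
    linarith
  intro t ht
  have h1 : f t ≤ 0 := le_trans (hmax' t ht) hM0
  have h2 : 0 ≤ f t := dist_nonneg
  have : f t = 0 := le_antisymm h1 h2
  simpa only [hf, dist_eq_zero] using this
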